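/- In the contracted radius gadget (G',w'), every vertex v not belonging to {a_1,…,a_{2^s}} has eccentricity e_{G',w'}(v) ≥ 3α. -/

import Mathlib

open scoped ENNReal

set_option linter.unusedVariables false

/-- The length of a walk with respect to `ℝ≥0∞` edge weights. -/
noncomputable def wlen {V : Type*} (G : SimpleGraph V) (w : V → V → ℝ≥0∞) {u v : V}
    (p : G.Walk u v) : ℝ≥0∞ :=
  (p.darts.map fun d => w d.toProd.1 d.toProd.2).sum

/-- The weighted distance: the infimum of walk lengths. -/
noncomputable def wdist {V : Type*} (G : SimpleGraph V) (w : V → V → ℝ≥0∞) (u v : V) : ℝ≥0∞ :=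
  ⨅ p : G.Walk u v, wlen G w p

/-- Eccentricity `e_{G,w}(u) = max_v d_{G,w}(u,v)`. -/
noncomputable def wecc {V : Type*} (G : SimpleGraph V) (w : V → V → ℝ≥0∞) (u : V) : ℝ≥0∞ :=
  ⨆ v, wdist G w u v

/-- Weighted radius `R_{G,w} = min_u e_{G,w}(u)`. -/
noncomputable def wrad {V : Type*} (G : SimpleGraph V) (w : V → V → ℝ≥0∞) : ℝ≥0∞ :=
  ⨅ u, wecc G w u

/-- Vertices of the contracted radius gadget. -/
inductive CRV (s ℓ : ℕ) where
  /-- the hub `t` -/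
  | t
  /-- the extra node `a_0` -/
  | a0
  /-- node `a^z_{j+1}` -/
  | ah (z : Bool) (j : Fin s)
  /-- node `a*_{j+1}` -/
  | as (j : Fin ℓ)
  /-- node `a_{i+1}` -/
  | a (i : Fin (2 ^ s))
  /-- node `b_{i+1}` -/
  | b (i : Fin (2 ^ s))
  deriving DecidableEq, Fintype

/-- Base (oriented) adjacency of the contracted radius gadget.  Here `bin(i,j)` is
realized as `Nat.testBit` on the 0-based index, and `bin(i,j)⊕1` as its negation. -/
def crAdj0 {s ℓ : ℕ} : CRV s ℓ → CRV s ℓ → Prop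
  | .t, .ah _ _ => True
  | .t, .as _ => True
  | .a i, .ah z j => z = i.val.testBit j.val
  | .b i, .ah z j => z = !(i.val.testBit j.val)
  | .a i, .a i' => i ≠ i'
  | .b i, .b i' => i ≠ i'
  | .a _, .as _ => True
  | .b _, .as _ => True
  | .a0, .a _ => True
  | _, _ => False

/-- The contracted radius gadget graph. -/
def crGadget (s ℓ : ℕ) : SimpleGraph (CRV s ℓ) where
  Adj u v := u ≠ v ∧ (crAdj0 u v ∨ crAdj0 v u)
  symm := ⟨fun u v huv => ⟨huv.1.symm, huv.2.symm⟩⟩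
  loopless := ⟨fun u hu => hu.1 rfl⟩

/-- The weights of the contracted radius gadget: every edge has weight `α`, except
`a_i`–`a*_j` which has weight `α` if `x_{i,j}=1` and `β` otherwise, `b_i`–`a*_j` which
has weight `α` if `y_{i,j}=1` and `β` otherwise, and `a_0`–`a_i` which has weight `2α`. -/
def crW {s ℓ : ℕ} (x y : Fin (2 ^ s) → Fin ℓ → Bool) (α β : ℕ) : CRV s ℓ → CRV s ℓ → ℕ
  | .a i, .as j => if x i j then α else β
  | .as j, .a i => if x i j then α else β
  | .b i, .as j => if y i j then α else β
  | .as j, .b i => if y i j then α else β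
  | .a0, .a _ => 2 * α
  | .a _, .a0 => 2 * α
  | _, _ => α

lemma wlen_cons {V : Type*} (G : SimpleGraph V) (w : V → V → ℝ≥0∞) {u v r : V}
    (h : G.Adj u v) (p : G.Walk v r) :
    wlen G w (SimpleGraph.Walk.cons h p) = w u v + wlen G w p := by
  simp [wlen]

lemma crW_ge {s ℓ : ℕ} (x y : Fin (2 ^ s) → Fin ℓ → Bool) {α β : ℕ} (hαβ : α ≤ β)
    (p q : CRV s ℓ) : α ≤ crW x y α β p q := by
  cases p <;> cases q <;> simp only [crW] <;> (try split_ifs) <;> omega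

lemma adj_a0 {s ℓ : ℕ} {u : CRV s ℓ} (h : (crGadget s ℓ).Adj u .a0) :
    ∃ i, u = CRV.a i := by
  obtain ⟨-, h | h⟩ := h <;> cases u <;> simp_all [crAdj0]

section main
variable {s ℓ : ℕ} (x y : Fin (2 ^ s) → Fin ℓ → Bool) {α β : ℕ}

lemma wlen_pos (hαβ : α ≤ β) {u v : CRV s ℓ} (huv : u ≠ v)
    (p : (crGadget s ℓ).Walk u v) :
    ((α : ℕ) : ℝ≥0∞) ≤ wlen _ (fun p q => ((crW x y α β p q : ℕ) : ℝ≥0∞)) p := by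
  cases p with
  | nil => exact absurd rfl huv
  | cons h q =>
    rw [wlen_cons]
    exact le_trans (by exact_mod_cast Nat.cast_le.mpr (crW_ge x y hαβ _ _)) le_self_add

lemma wlen_to_a0' (hαβ : α ≤ β) {u r : CRV s ℓ} (p : (crGadget s ℓ).Walk u r)
    (hr : r = .a0) (hu : u ≠ .a0) :
    ((2 * α : ℕ) : ℝ≥0∞) ≤ wlen _ (fun p q => ((crW x y α β p q : ℕ) : ℝ≥0∞)) p := by
  induction p with
  | nil => exact absurd hr hu
  | @cons u w _ h q ih =>
    rw [wlen_cons]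
    by_cases hw : w = CRV.a0
    · subst hw hr
      obtain ⟨i, rfl⟩ := adj_a0 h
      have : crW x y α β (CRV.a i) CRV.a0 = 2 * α := rfl
      rw [this]
      exact le_self_add
    · exact le_trans (ih hr hw) le_add_self

lemma wlen_to_a0 (hαβ : α ≤ β) {u : CRV s ℓ} (p : (crGadget s ℓ).Walk u .a0)
    (hu : u ≠ .a0) :
    ((2 * α : ℕ) : ℝ≥0∞) ≤ wlen _ (fun p q => ((crW x y α β p q : ℕ) : ℝ≥0∞)) p :=
  wlen_to_a0' x y hαβ p rfl hu

end main

/-- In the contracted radius gadget `(G',w')`, every vertex `v` not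
belonging to `{a_1,…,a_{2^s}}` has eccentricity `e_{G',w'}(v) ≥ 3α`. -/
theorem stmt8 (s ℓ : ℕ) (hs : 1 ≤ s) (hℓ : 1 ≤ ℓ)
    (α β : ℕ) (hα : 0 < α) (hαβ : α ≤ β)
    (x y : Fin (2 ^ s) → Fin ℓ → Bool)
    (v : CRV s ℓ) (hv : ∀ i : Fin (2 ^ s), v ≠ CRV.a i) :
    ((3 * α : ℕ) : ℝ≥0∞) ≤
      wecc (crGadget s ℓ) (fun p q => ((crW x y α β p q : ℕ) : ℝ≥0∞)) v := by
  set W : CRV s ℓ → CRV s ℓ → ℝ≥0∞ := fun p q => ((crW x y α β p q : ℕ) : ℝ≥0∞) with hW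
  have hsplit : ((3 * α : ℕ) : ℝ≥0∞) = ((α : ℕ) : ℝ≥0∞) + ((2 * α : ℕ) : ℝ≥0∞) := by
    push_cast; ring
  by_cases hva0 : v = CRV.a0
  · -- target t
    subst hva0
    have hd : ((3 * α : ℕ) : ℝ≥0∞) ≤ wdist (crGadget s ℓ) W CRV.a0 CRV.t := by
      refine le_iInf fun p => ?_
      cases p with
      | cons h q =>
        obtain ⟨i, hi⟩ := adj_a0 h.symm
        subst hi
        rw [wlen_cons, hsplit, add_comm ((α : ℕ) : ℝ≥0∞)]
        refine add_le_add (le_of_eq ?_) (wlen_pos x y hαβ (by simp) q)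
        rw [hW]; norm_cast
    exact le_trans hd (le_iSup _ CRV.t)
  · -- target a0
    have hd : ((3 * α : ℕ) : ℝ≥0∞) ≤ wdist (crGadget s ℓ) W v CRV.a0 := by
      refine le_iInf fun p => ?_
      cases p with
      | nil => exact absurd rfl hva0
      | @cons _ u _ h q =>
        by_cases hu : u = CRV.a0
        · subst hu
          obtain ⟨i, hi⟩ := adj_a0 h
          exact absurd hi (hv i)
        · rw [wlen_cons, hsplit]
          refine add_le_add ?_ (wlen_to_a0 x y hαβ q hu)
          exact_mod_cast Nat.cast_le.mpr (crW_ge x y hαβ v u)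
    exact le_trans hd (le_iSup _ CRV.a0)
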